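/- Let W(x) be a matrix polynomial of degree N with p-by-p complex coefficients, x_a \in ℂ, let l(x) be a covector polynomial (row vector valued) of degree at most \kappa_i - 1 such that (x - x_a)^{\kappa_i} divides l(x)*W(x), and let r(x) be a vector polynomial of degree at most \kappa_j - 1 such that (x - x_a)^{\kappa_j} divides W(x)*r(x). Then there exists a scalar polynomial w(x) \in ℂ[x] of degree at most min(\kappa_i, \kappa_j) + N - 2 such that l(x) * W(x) * r(x) = (x - x_a)^{max(\kappa_i, \kappa_j)} * w(x). -/

import Mathlib

/-- If `(x-x_a)^{κ_i}` divides the covector polynomial `l(x) W(x)` (with `deg l ≤ κ_i - 1`)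
and `(x-x_a)^{κ_j}` divides the vector polynomial `W(x) r(x)` (with `deg r ≤ κ_j - 1`),
where `W` is a matrix polynomial of degree (at most) `N`, then
`l(x) W(x) r(x) = (x-x_a)^{max(κ_i,κ_j)} w(x)` for a scalar polynomial `w` of degree at most
`min(κ_i,κ_j) + N - 2`. -/
theorem stmt_6 (p N κi κj : ℕ) (hκi : 1 ≤ κi) (hκj : 1 ≤ κj)
    (W : Matrix (Fin p) (Fin p) (Polynomial ℂ))
    (hW : ∀ i k, (W i k).degree ≤ (N : WithBot ℕ)) (xa : ℂ)
    (l r : Fin p → Polynomial ℂ)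
    (hl : ∀ i, (l i).degree ≤ ((κi - 1 : ℕ) : WithBot ℕ))
    (hr : ∀ k, (r k).degree ≤ ((κj - 1 : ℕ) : WithBot ℕ))
    (hlW : ∀ k, (Polynomial.X - Polynomial.C xa) ^ κi ∣ ∑ i, l i * W i k)
    (hWr : ∀ i, (Polynomial.X - Polynomial.C xa) ^ κj ∣ ∑ k, W i k * r k) :
    ∃ w : Polynomial ℂ, w.degree ≤ ((min κi κj + N - 2 : ℕ) : WithBot ℕ) ∧
      ∑ i, ∑ k, l i * W i k * r k =
        (Polynomial.X - Polynomial.C xa) ^ max κi κj * w := by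
  set S : Polynomial ℂ := ∑ i, ∑ k, l i * W i k * r k with hS
  have hdvd1 : (Polynomial.X - Polynomial.C xa) ^ κi ∣ S := by
    have : S = ∑ k, (∑ i, l i * W i k) * r k := by
      rw [hS, Finset.sum_comm]
      simp [Finset.sum_mul]
    rw [this]
    exact Finset.dvd_sum fun k _ => (hlW k).mul_right _
  have hdvd2 : (Polynomial.X - Polynomial.C xa) ^ κj ∣ S := by
    have : S = ∑ i, l i * ∑ k, W i k * r k := by
      rw [hS]
      simp [Finset.mul_sum, mul_assoc]
    rw [this]
    exact Finset.dvd_sum fun i _ => (hWr i).mul_left _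
  have hdvd : (Polynomial.X - Polynomial.C xa) ^ max κi κj ∣ S := by
    rcases max_cases κi κj with ⟨h, _⟩ | ⟨h, _⟩
    · rw [h]; exact hdvd1
    · rw [h]; exact hdvd2
  obtain ⟨w, hw⟩ := hdvd
  by_cases hS0 : S = 0
  · refine ⟨0, by simp, ?_⟩
    rw [hS0, mul_zero]
  · have hXC : (Polynomial.X - Polynomial.C xa) ≠ 0 := Polynomial.X_sub_C_ne_zero xa
    have hdne : (Polynomial.X - Polynomial.C xa) ^ max κi κj ≠ 0 := pow_ne_zero _ hXC
    have hwne : w ≠ 0 := by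
      rintro rfl
      exact hS0 (by rw [hw, mul_zero])
    have hSdeg : S.natDegree ≤ (κi - 1) + N + (κj - 1) := by
      rw [hS]
      refine Polynomial.natDegree_sum_le_of_forall_le _ _ fun i _ => ?_
      refine Polynomial.natDegree_sum_le_of_forall_le _ _ fun k _ => ?_
      calc (l i * W i k * r k).natDegree
          ≤ (l i * W i k).natDegree + (r k).natDegree := Polynomial.natDegree_mul_le
        _ ≤ (l i).natDegree + (W i k).natDegree + (r k).natDegree := by
            exact Nat.add_le_add_right (Polynomial.natDegree_mul_le (p := l i) (q := W i k)) _
        _ ≤ (κi - 1) + N + (κj - 1) := by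
            gcongr
            · exact Polynomial.natDegree_le_iff_degree_le.mpr (hl i)
            · exact Polynomial.natDegree_le_iff_degree_le.mpr (hW i k)
            · exact Polynomial.natDegree_le_iff_degree_le.mpr (hr k)
    have heq : S.natDegree = max κi κj + w.natDegree := by
      rw [hw, Polynomial.natDegree_mul hdne hwne, Polynomial.natDegree_pow,
        Polynomial.natDegree_X_sub_C, mul_one]
    have hwdeg : w.natDegree ≤ min κi κj + N - 2 := by omega
    exact ⟨w, Polynomial.natDegree_le_iff_degree_le.mp hwdeg, hw⟩
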